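/- For all integers n and k, qbinom(n,k) = qbinom(n, n-k), i.e., the basic symmetry of the Gaussian binomial coefficient extends to all integer entries. -/
import Mathlib


open LaurentPolynomial in
/-- The ordinary Gaussian binomial coefficient as a (Laurent) polynomial in `q = T 1`,
defined by the `q`-Pascal rule; it is `0` when the lower entry exceeds the upper one. -/
noncomputable def gauss : ℕ → ℕ → LaurentPolynomial ℤ
  | _, 0 => 1
  | 0, _ + 1 => 0
  | a + 1, b + 1 => gauss a b + T ((b : ℤ) + 1) * gauss a (b + 1)

open LaurentPolynomial in
/-- The generalized `q`-binomial coefficient, a Laurent polynomial in `q = T 1`,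
extended to arbitrary integer entries. -/
noncomputable def qbinom (n k : ℤ) : LaurentPolynomial ℤ :=
  if 0 ≤ k ∧ k ≤ n then gauss n.toNat k.toNat
  else if n < 0 ∧ 0 ≤ k then
    (-1) ^ k.toNat * T (k * (2 * n - k + 1) / 2) * gauss (k - n - 1).toNat k.toNat
  else if k ≤ n ∧ n < 0 then
    (-1) ^ (n - k).toNat * T ((n * (n + 1) - k * (k + 1)) / 2) *
      gauss (-k - 1).toNat (-n - 1).toNat
  else 0

open LaurentPolynomial

lemma gauss_zero (a : ℕ) : gauss a 0 = 1 := by cases a <;> rfl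

lemma gauss_succ (a b : ℕ) : gauss (a+1) (b+1) = gauss a b + T ((b:ℤ)+1) * gauss a (b+1) := rfl

lemma gauss_of_lt : ∀ a b : ℕ, a < b → gauss a b = 0
  | 0, _+1, _ => rfl
  | a+1, b+1, h => by
      rw [gauss_succ, gauss_of_lt a b (by omega), gauss_of_lt a (b+1) (by omega)]; ring

lemma gauss_self : ∀ a : ℕ, gauss a a = 1
  | 0 => rfl
  | a+1 => by rw [gauss_succ, gauss_self a, gauss_of_lt a (a+1) (by omega)]; ring

lemma pascal2 : ∀ a b : ℕ, gauss (a+1) (b+1) = T ((a:ℤ) - b) * gauss a b + gauss a (b+1)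
  | 0, 0 => by simp [gauss_succ, gauss_zero, gauss_of_lt 0 1 (by omega)]
  | 0, b+1 => by
      rw [gauss_succ, gauss_of_lt 0 (b+1) (by omega), gauss_of_lt 0 (b+2) (by omega)]; ring
  | a+1, 0 => by
      have h := pascal2 a 0
      have hd : gauss (a+1) 1 = 1 + T (1:ℤ) * gauss a 1 := by
        rw [gauss_succ, gauss_zero]; norm_num
      rw [gauss_succ (a+1) 0, gauss_zero]
      rw [gauss_zero] at h
      push_cast at h ⊢
      rw [show ((a:ℤ)+1) - 0 = ((a:ℤ) - 0) + 1 by ring, T_add]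
      linear_combination T (1:ℤ) * h - hd
  | a+1, c+1 => by
      have h1 := pascal2 a c
      have h2 := pascal2 a (c+1)
      have hd1 := gauss_succ a c
      have hd2 := gauss_succ a (c+1)
      rw [gauss_succ (a+1) (c+1)]
      push_cast at h1 h2 hd1 hd2 ⊢
      rw [show ((a:ℤ)+1) - ((c:ℤ)+1) = ((a:ℤ) - ((c:ℤ)+1)) + 1 by ring,
          T_add ((a:ℤ) - ((c:ℤ)+1)) 1, T_add ((c:ℤ)+1) 1]
      rw [show ((c:ℤ)+1+1) = ((c:ℤ)+1) + 1 by ring, T_add ((c:ℤ)+1) 1] at hd2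
      rw [show ((a:ℤ) - (c:ℤ)) = ((a:ℤ) - ((c:ℤ)+1)) + 1 by ring,
          T_add ((a:ℤ) - ((c:ℤ)+1)) 1] at h1
      linear_combination h1 - (T ((a:ℤ) - ((c:ℤ)+1)) * T 1) * hd1 + (T ((c:ℤ)+1) * T 1) * h2 - hd2

lemma gauss_symm : ∀ a b : ℕ, b ≤ a → gauss a b = gauss a (a - b)
  | 0, 0, _ => rfl
  | a+1, 0, _ => by rw [gauss_zero, Nat.sub_zero, gauss_self]
  | a+1, c+1, h => by
      rcases Nat.lt_or_ge c a with hca | hca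
      · have hb : a + 1 - (c+1) = (a - c - 1) + 1 := by omega
        rw [hb, pascal2 a c, gauss_succ a (a - c - 1),
            show a - c - 1 + 1 = a - c by omega]
        have e1 : gauss a (a - c - 1) = gauss a (c+1) := by
          rw [gauss_symm a (a-c-1) (by omega)]; congr 1; omega
        have e2 : gauss a (a - c) = gauss a c := by
          rw [gauss_symm a (a-c) (by omega)]; congr 1; omega
        rw [e1, e2]
        rw [show ((a - c - 1 : ℕ) : ℤ) + 1 = (a:ℤ) - c by omega]
        ring
      · have hc : c = a := by omega
        subst hc
        simp [gauss_self, gauss_zero]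

theorem qbinom_symm (n k : ℤ) : qbinom n k = qbinom n (n - k) := by
  unfold qbinom
  by_cases h1 : 0 ≤ k ∧ k ≤ n
  · rw [if_pos h1, if_pos (show 0 ≤ n - k ∧ n - k ≤ n by omega)]
    rw [gauss_symm n.toNat k.toNat (by omega)]
    congr 1
    omega
  · by_cases h2 : n < 0 ∧ 0 ≤ k
    · rw [if_neg h1, if_pos h2, if_neg (show ¬(0 ≤ n - k ∧ n - k ≤ n) by omega),
          if_neg (show ¬(n < 0 ∧ 0 ≤ n - k) by omega),
          if_pos (show n - k ≤ n ∧ n < 0 by omega)]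
      have e1 : (n - (n - k)).toNat = k.toNat := by omega
      have e2 : (n * (n + 1) - (n - k) * (n - k + 1)) / 2 = k * (2 * n - k + 1) / 2 := by
        congr 1; ring
      have e3 : (-(n - k) - 1).toNat = (k - n - 1).toNat := by omega
      rw [e1, e2, e3]
      congr 1
      rw [gauss_symm (k - n - 1).toNat k.toNat (by omega)]
      congr 1
      omega
    · by_cases h3 : k ≤ n ∧ n < 0
      · rw [if_neg h1, if_neg h2, if_pos h3,
            if_neg (show ¬(0 ≤ n - k ∧ n - k ≤ n) by omega),
            if_pos (show n < 0 ∧ 0 ≤ n - k by omega)]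
        have e2 : (n - k) * (2 * n - (n - k) + 1) / 2 = (n * (n + 1) - k * (k + 1)) / 2 := by
          congr 1; ring
        have e3 : (n - k - n - 1).toNat = (-k - 1).toNat := by omega
        rw [e2, e3]
        congr 1
        rw [gauss_symm (-k - 1).toNat (-n - 1).toNat (by omega)]
        congr 1
        omega
      · rw [if_neg h1, if_neg h2, if_neg h3,
            if_neg (show ¬(0 ≤ n - k ∧ n - k ≤ n) by omega),
            if_neg (show ¬(n < 0 ∧ 0 ≤ n - k) by omega),
            if_neg (show ¬(n - k ≤ n ∧ n < 0) by omega)]
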